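/- Let p be a prime > 7 and J a multiset over (ZMod p)^3 with |J| = 5p - 3, N^p(J) = 0, and N^{2p}(J) ≡ r (mod p). Then N^{3p}(J) ≡ 2r + 4 and N^{4p}(J) ≡ r + 3 (mod p), and at most one of r, 2r+4, r+3 is divisible by p. -/

import Mathlib

open Finset

/-- Number of zero-sum sub-multisets of `J` of cardinality `k`. -/
def N {p : ℕ} (k : ℕ) (J : Multiset (Fin 3 → ZMod p)) : ℕ :=
  (J.powerset.filter (fun T => Multiset.card T = k ∧ T.sum = 0)).card

variable {p : ℕ} [Fact p.Prime]

/-- count of zero-sum subsets of size k of an indexed family -/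
def cnt {ι : Type} [Fintype ι] [DecidableEq ι] (a : ι → (Fin 3 → ZMod p)) (k : ℕ) : ℕ :=
  (Finset.univ.filter (fun S : Finset ι => S.card = k ∧ ∑ i ∈ S, a i = 0)).card

lemma fiber_card {ι : Type} [Fintype ι] [DecidableEq ι] (S : Finset ι) :
    (Finset.univ.filter (fun x : ι → ZMod p => Finset.univ.filter (fun i => x i ≠ 0) = S)).card
      = (p - 1) ^ S.card := by
  have hcard : Fintype.card {y : ZMod p // y ≠ 0} = p - 1 := by
    haveI : Fact (0 < p) := ⟨(Fact.out : p.Prime).pos⟩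
    rw [Fintype.card_subtype_compl, ZMod.card]
    simp
  rw [← Fintype.card_subtype]
  have e : {x : ι → ZMod p // Finset.univ.filter (fun i => x i ≠ 0) = S}
      ≃ (S → {y : ZMod p // y ≠ 0}) := by
    refine
      { toFun := fun x i => ⟨x.1 i.1, ?_⟩
        invFun := fun y => ⟨fun i => if h : i ∈ S then (y ⟨i, h⟩).1 else 0, ?_⟩
        left_inv := ?_
        right_inv := ?_ }
    · have := x.2
      rw [Finset.ext_iff] at this
      have := (this i.1).2 i.2
      simpa using this
    · ext i
      simp only [Finset.mem_filter, Finset.mem_univ, true_and]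
      constructor
      · intro h
        by_contra hi
        simp [hi] at h
      · intro h
        simp only [h, dif_pos]
        exact (y ⟨i, h⟩).2
    · rintro ⟨x, hx⟩
      ext i
      simp only
      by_cases h : i ∈ S
      · simp [h]
      · simp only [h, dif_neg, not_false_iff]
        rw [Finset.ext_iff] at hx
        have := (hx i).1
        simp only [Finset.mem_filter, Finset.mem_univ, true_and] at this
        by_contra hxi
        exact h (this fun hh => hxi hh.symm)
    · intro y
      ext i
      simp [i.2]
  rw [Fintype.card_congr e, Fintype.card_fun, hcard, Fintype.card_coe]

lemma cw_sum {ι : Type} [Fintype ι] [DecidableEq ι] (a : ι → (Fin 3 → ZMod p))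
    (h : 4 * (p - 1) < Fintype.card ι) :
    (p : ℕ) ∣ ∑ S ∈ Finset.univ.filter
        (fun S : Finset ι => (p ∣ S.card) ∧ ∑ i ∈ S, a i = 0), (p - 1) ^ S.card := by
  classical
  haveI : Fact (0 < p) := ⟨(Fact.out : p.Prime).pos⟩
  set b : ι → Fin 4 → ZMod p := fun i => Fin.cons 1 (a i) with hb
  set f : Fin 4 → MvPolynomial ι (ZMod p) :=
    fun j => ∑ i : ι, MvPolynomial.C (b i j) * MvPolynomial.X i ^ (p - 1) with hf
  have hdeg : ∀ j, (f j).totalDegree ≤ p - 1 := by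
    intro j
    refine le_trans (MvPolynomial.totalDegree_finset_sum _ _) ?_
    refine Finset.sup_le fun i _ => ?_
    refine le_trans (MvPolynomial.totalDegree_mul _ _) ?_
    simp [MvPolynomial.totalDegree_C, MvPolynomial.totalDegree_X_pow]
  have hsum : ∑ j : Fin 4, (f j).totalDegree < Fintype.card ι := by
    calc ∑ j : Fin 4, (f j).totalDegree ≤ ∑ _j : Fin 4, (p - 1) :=
          Finset.sum_le_sum fun j _ => hdeg j
      _ = 4 * (p - 1) := by simp [mul_comm]
      _ < Fintype.card ι := h
  have hcw := char_dvd_card_solutions_of_sum_lt p hsum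
  -- identify the solution count
  have heval : ∀ (x : ι → ZMod p) (j : Fin 4),
      MvPolynomial.eval x (f j) = ∑ i ∈ Finset.univ.filter (fun i => x i ≠ 0), b i j := by
    intro x j
    rw [hf]
    simp only [map_sum, map_mul, map_pow, MvPolynomial.eval_C, MvPolynomial.eval_X]
    rw [Finset.sum_filter]
    refine Finset.sum_congr rfl fun i _ => ?_
    by_cases hx : x i = 0
    · simp [hx, Nat.sub_ne_zero_of_lt (Fact.out : p.Prime).one_lt, zero_pow]
    · simp [hx, ZMod.pow_card_sub_one_eq_one hx]
  have hcond : ∀ x : ι → ZMod p,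
      (∀ j : Fin 4, MvPolynomial.eval x (f j) = 0) ↔
      ((p ∣ (Finset.univ.filter (fun i => x i ≠ 0)).card) ∧
        ∑ i ∈ Finset.univ.filter (fun i => x i ≠ 0), a i = 0) := by
    intro x
    set S := Finset.univ.filter (fun i => x i ≠ 0)
    rw [Fin.forall_fin_succ]
    simp only [heval]
    constructor
    · rintro ⟨h0, hs⟩
      refine ⟨?_, ?_⟩
      · have : (S.card : ZMod p) = 0 := by
          have : ∑ i ∈ S, b i 0 = (S.card : ZMod p) := by
            simp [hb, Fin.cons_zero]
          rwa [this] at h0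
        exact (ZMod.natCast_eq_zero_iff _ _).1 this
      · funext j
        have := hs j
        have hbs : ∑ i ∈ S, b i j.succ = ∑ i ∈ S, a i j := by
          refine Finset.sum_congr rfl fun i _ => ?_
          simp [hb, Fin.cons_succ]
        rw [hbs] at this
        simpa [Finset.sum_apply] using this
    · rintro ⟨h0, hs⟩
      refine ⟨?_, fun j => ?_⟩
      · have : ∑ i ∈ S, b i 0 = (S.card : ZMod p) := by
          simp [hb, Fin.cons_zero]
        rw [this]
        exact (ZMod.natCast_eq_zero_iff _ _).2 h0
      · have hbs : ∑ i ∈ S, b i j.succ = ∑ i ∈ S, a i j := by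
          refine Finset.sum_congr rfl fun i _ => ?_
          simp [hb, Fin.cons_succ]
        rw [hbs]
        have := congrFun hs j
        simpa [Finset.sum_apply] using this
  have hcard : Fintype.card {x : ι → ZMod p // ∀ j ∈ (Finset.univ : Finset (Fin 4)),
      MvPolynomial.eval x (f j) = 0} =
      ∑ S ∈ Finset.univ.filter
        (fun S : Finset ι => (p ∣ S.card) ∧ ∑ i ∈ S, a i = 0), (p - 1) ^ S.card := by
    rw [Fintype.card_subtype]
    have : (Finset.univ.filter (fun x : ι → ZMod p =>
        ∀ j ∈ (Finset.univ : Finset (Fin 4)), MvPolynomial.eval x (f j) = 0)) =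
        (Finset.univ.filter (fun x : ι → ZMod p =>
          (p ∣ (Finset.univ.filter (fun i => x i ≠ 0)).card) ∧
          ∑ i ∈ Finset.univ.filter (fun i => x i ≠ 0), a i = 0)) := by
      ext x
      simp only [Finset.mem_filter, Finset.mem_univ, true_and]
      rw [← hcond x]
      simp
    rw [this]
    rw [Finset.card_eq_sum_card_fiberwise
      (f := fun x : ι → ZMod p => Finset.univ.filter (fun i => x i ≠ 0))
      (t := Finset.univ.filter
        (fun S : Finset ι => (p ∣ S.card) ∧ ∑ i ∈ S, a i = 0)) ?_]
    · refine Finset.sum_congr rfl fun S hS => ?_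
      rw [← fiber_card S]
      congr 1
      ext x
      simp only [Finset.mem_filter, Finset.mem_univ, true_and] at hS ⊢
      constructor
      · rintro ⟨_, h2⟩; exact h2
      · intro h2
        refine ⟨?_, h2⟩
        rw [h2]; exact hS
    · intro x hx
      simp only [Finset.mem_coe, Finset.mem_filter, Finset.mem_univ, true_and] at hx ⊢
      exact hx
  rw [← hcard]
  convert hcw using 2

lemma cw_rel {ι : Type} [Fintype ι] [DecidableEq ι] (a : ι → (Fin 3 → ZMod p))
    (hodd : Odd p) (h : 4 * (p - 1) < Fintype.card ι) :
    ∑ k ∈ Finset.range (Fintype.card ι / p + 1), (-1 : ZMod p) ^ k * (cnt a (k * p) : ZMod p)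
      = 0 := by
  classical
  haveI : Fact (0 < p) := ⟨(Fact.out : p.Prime).pos⟩
  have h1 : ((∑ S ∈ Finset.univ.filter
      (fun S : Finset ι => (p ∣ S.card) ∧ ∑ i ∈ S, a i = 0), (p - 1) ^ S.card : ℕ) : ZMod p)
      = 0 := (ZMod.natCast_eq_zero_iff _ _).2 (cw_sum a h)
  push_cast at h1
  have hm1 : ((p - 1 : ℕ) : ZMod p) = -1 := by
    have : ((p - 1 : ℕ) : ZMod p) = (p : ZMod p) - 1 := by
      have := (Fact.out : p.Prime).one_le
      push_cast [this]
      ring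
    rw [this, ZMod.natCast_self]
    ring
  rw [Finset.sum_congr rfl (fun S hS => by
    simp only [Finset.mem_filter, Finset.mem_univ, true_and] at hS
    obtain ⟨⟨m, hmm⟩, _⟩ := hS
    rw [hm1, hmm, pow_mul, hodd.neg_one_pow,
      Nat.mul_div_cancel_left m (Fact.out : Nat.Prime p).pos] : ∀ S ∈ Finset.univ.filter
      (fun S : Finset ι => (p ∣ S.card) ∧ ∑ i ∈ S, a i = 0),
      ((p - 1 : ℕ) : ZMod p) ^ S.card = (-1 : ZMod p) ^ (S.card / p))] at h1
  rw [← Finset.sum_fiberwise_of_maps_to (g := fun S : Finset ι => S.card / p)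
    (t := Finset.range (Fintype.card ι / p + 1)) ?_ (fun S => (-1 : ZMod p) ^ (S.card / p))]
    at h1
  · rw [← h1]
    refine Finset.sum_congr rfl fun k hk => ?_
    have hfe : (Finset.univ.filter
        (fun S : Finset ι => (p ∣ S.card) ∧ ∑ i ∈ S, a i = 0)).filter
          (fun S => S.card / p = k)
        = Finset.univ.filter (fun S : Finset ι => S.card = k * p ∧ ∑ i ∈ S, a i = 0) := by
      ext S
      simp only [Finset.mem_filter, Finset.mem_univ, true_and]
      constructor
      · rintro ⟨⟨hd, hs⟩, hdiv⟩
        refine ⟨?_, hs⟩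
        rw [← hdiv, Nat.div_mul_cancel hd]
      · rintro ⟨hc, hs⟩
        refine ⟨⟨hc ▸ ⟨k, (mul_comm k p)⟩, hs⟩, ?_⟩
        rw [hc, Nat.mul_div_cancel _ (Fact.out : Nat.Prime p).pos]
    rw [hfe]
    rw [Finset.sum_congr rfl (fun S hS => by
      simp only [Finset.mem_filter, Finset.mem_univ, true_and] at hS
      rw [hS.1, Nat.mul_div_cancel _ (Fact.out : Nat.Prime p).pos] :
        ∀ S ∈ Finset.univ.filter (fun S : Finset ι => S.card = k * p ∧ ∑ i ∈ S, a i = 0),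
        (-1 : ZMod p) ^ (S.card / p) = (-1 : ZMod p) ^ k)]
    rw [Finset.sum_const, cnt, nsmul_eq_mul, mul_comm]
  · intro S hS
    simp only [Finset.mem_range]
    exact Nat.lt_succ_of_le (Nat.div_le_div_right (Finset.card_le_univ S))

lemma cnt_zero {ι : Type} [Fintype ι] [DecidableEq ι] (a : ι → (Fin 3 → ZMod p)) :
    cnt a 0 = 1 := by
  rw [cnt]
  have : Finset.univ.filter (fun S : Finset ι => S.card = 0 ∧ ∑ i ∈ S, a i = 0) = {∅} := by
    ext S
    simp only [Finset.mem_filter, Finset.mem_univ, true_and, Finset.mem_singleton,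
      Finset.card_eq_zero]
    constructor
    · rintro ⟨h, _⟩; exact h
    · rintro rfl; simp
  rw [this, Finset.card_singleton]

/-- count of zero-sum subsets of `W` of size `k` -/
def cntW {ι : Type} [Fintype ι] [DecidableEq ι] (a : ι → (Fin 3 → ZMod p)) (W : Finset ι)
    (k : ℕ) : ℕ :=
  (W.powerset.filter (fun S => S.card = k ∧ ∑ i ∈ S, a i = 0)).card

lemma cnt_subtype {ι : Type} [Fintype ι] [DecidableEq ι] (a : ι → (Fin 3 → ZMod p))
    (W : Finset ι) (k : ℕ) :
    cnt (fun i : {x // x ∈ W} => a i.1) k = cntW a W k := by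
  classical
  rw [cnt, cntW]
  refine Finset.card_nbij' (fun S => S.map (Function.Embedding.subtype _))
    (fun T => T.subtype (· ∈ W)) ?_ ?_ ?_ ?_
  · intro S hS
    simp only [Finset.mem_coe, Finset.mem_filter, Finset.mem_univ, true_and] at hS
    simp only [Finset.mem_coe, Finset.mem_filter, Finset.mem_powerset]
    refine ⟨?_, ?_, ?_⟩
    · intro x hx
      simp only [Finset.mem_map, Function.Embedding.coe_subtype] at hx
      obtain ⟨y, _, rfl⟩ := hx
      exact y.2
    · rw [Finset.card_map]; exact hS.1
    · rw [Finset.sum_map]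
      exact hS.2
  · intro T hT
    simp only [Finset.mem_coe, Finset.mem_filter, Finset.mem_univ, true_and]
    simp only [Finset.mem_coe, Finset.mem_filter, Finset.mem_powerset] at hT
    obtain ⟨hsub, hcard, hsum⟩ := hT
    have hmap : (T.subtype (· ∈ W)).map (Function.Embedding.subtype _) = T := by
      rw [Finset.subtype_map, Finset.filter_true_of_mem (fun x hx => hsub hx)]
    constructor
    · have := congrArg Finset.card hmap
      rw [Finset.card_map] at this
      rw [this, hcard]
    · have := congrArg (fun s => ∑ i ∈ s, a i) hmap
      rw [Finset.sum_map] at this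
      rw [show (fun i : {x // x ∈ W} => a i.1) = (a ∘ (Function.Embedding.subtype (· ∈ W)))
        from rfl]
      rw [show ∑ i ∈ T.subtype (· ∈ W), (a ∘ (Function.Embedding.subtype (· ∈ W))) i
        = ∑ i ∈ T, a i from this]
      exact hsum
  · intro S hS
    ext x
    simp [Finset.mem_subtype]
  · intro T hT
    simp only [Finset.mem_coe, Finset.mem_filter, Finset.mem_powerset] at hT
    show (T.subtype (· ∈ W)).map (Function.Embedding.subtype _) = T
    rw [Finset.subtype_map, Finset.filter_true_of_mem (fun x hx => hT.1 hx)]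

lemma superset_count {ι : Type} [Fintype ι] [DecidableEq ι] (S : Finset ι) (m : ℕ)
    (hm : S.card ≤ m) :
    ((Finset.powersetCard m (Finset.univ : Finset ι)).filter (fun W => S ⊆ W)).card
      = (Fintype.card ι - S.card).choose (m - S.card) := by
  classical
  rw [← Finset.card_compl S, ← Finset.card_powersetCard]
  refine Finset.card_nbij' (fun W => W \ S) (fun U => S ∪ U) ?_ ?_ ?_ ?_
  · intro W hW
    simp only [Finset.mem_coe, Finset.mem_filter, Finset.mem_powersetCard] at hW
    obtain ⟨⟨_, hcard⟩, hsub⟩ := hW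
    rw [Finset.mem_coe, Finset.mem_powersetCard]
    refine ⟨?_, ?_⟩
    · intro x hx
      simp only [Finset.mem_sdiff] at hx
      simp [hx.2]
    · rw [Finset.card_sdiff_of_subset hsub, hcard]
  · intro U hU
    rw [Finset.mem_coe, Finset.mem_powersetCard] at hU
    obtain ⟨hsub, hcard⟩ := hU
    have hdisj : Disjoint S U := by
      rw [Finset.disjoint_right]
      intro x hx
      have := hsub hx
      simp only [Finset.mem_compl] at this
      exact this
    simp only [Finset.mem_coe, Finset.mem_filter, Finset.mem_powersetCard]
    refine ⟨⟨Finset.subset_univ _, ?_⟩, Finset.subset_union_left⟩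
    rw [Finset.card_union_of_disjoint hdisj, hcard]
    omega
  · intro W hW
    simp only [Finset.mem_coe, Finset.mem_filter, Finset.mem_powersetCard] at hW
    exact Finset.union_sdiff_of_subset hW.2
  · intro U hU
    rw [Finset.mem_coe, Finset.mem_powersetCard] at hU
    have hdisj : Disjoint S U := by
      rw [Finset.disjoint_right]
      intro x hx
      have := hU.1 hx
      simp only [Finset.mem_compl] at this
      exact this
    exact Finset.union_sdiff_cancel_left hdisj

lemma double_count {ι : Type} [Fintype ι] [DecidableEq ι] (a : ι → (Fin 3 → ZMod p))
    (k m : ℕ) (hk : k ≤ m) :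
    ∑ W ∈ Finset.powersetCard m (Finset.univ : Finset ι), cntW a W k
      = cnt a k * (Fintype.card ι - k).choose (m - k) := by
  classical
  have step1 : ∀ W ∈ Finset.powersetCard m (Finset.univ : Finset ι),
      cntW a W k = ∑ S ∈ Finset.univ.filter
        (fun S : Finset ι => S.card = k ∧ ∑ i ∈ S, a i = 0), if S ⊆ W then 1 else 0 := by
    intro W _
    rw [cntW, show W.powerset.filter (fun S => S.card = k ∧ ∑ i ∈ S, a i = 0)
      = (Finset.univ.filter (fun S : Finset ι => S.card = k ∧ ∑ i ∈ S, a i = 0)).filter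
          (fun S => S ⊆ W) from by
        ext S
        simp only [Finset.mem_filter, Finset.mem_powerset, Finset.mem_univ, true_and]
        tauto,
      Finset.card_filter]
  rw [Finset.sum_congr rfl step1, Finset.sum_comm]
  rw [Finset.sum_congr rfl (fun S hS => by
    simp only [Finset.mem_filter, Finset.mem_univ, true_and] at hS
    rw [← Finset.card_filter, superset_count S m (hS.1 ▸ hk), hS.1] :
    ∀ S ∈ Finset.univ.filter (fun S : Finset ι => S.card = k ∧ ∑ i ∈ S, a i = 0),
      (∑ W ∈ Finset.powersetCard m (Finset.univ : Finset ι), if S ⊆ W then 1 else 0)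
        = (Fintype.card ι - k).choose (m - k))]
  rw [Finset.sum_const, smul_eq_mul, cnt]

lemma powerset_map' {α β : Type*} (f : α → β) (s : Multiset α) :
    (s.map f).powerset = s.powerset.map (Multiset.map f) := by
  induction s using Multiset.induction_on with
  | empty => simp
  | cons a s ih =>
      simp only [Multiset.map_cons, Multiset.powerset_cons, ih, Multiset.map_add,
        Multiset.map_map, Function.comp_def]

lemma N_eq_cnt (k : ℕ) (l : List (Fin 3 → ZMod p)) :
    N k (↑l : Multiset (Fin 3 → ZMod p)) = cnt (l.get) k := by
  classical
  have hl : (↑l : Multiset (Fin 3 → ZMod p))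
      = Multiset.map l.get ((Finset.univ : Finset (Fin l.length)).val) := by
    rw [Fin.univ_def]
    show (↑l : Multiset _) = Multiset.map l.get (↑(List.finRange l.length))
    rw [Multiset.map_coe, List.map_get_finRange]
  rw [N, hl, powerset_map']
  rw [Multiset.filter_map]
  rw [Multiset.card_map, ← Multiset.countP_eq_card_filter]
  -- now : countP (P ∘ map l.get) univ.val.powerset = cnt l.get k
  rw [cnt, Finset.card_def, Finset.filter_val, ← Multiset.countP_eq_card_filter]
  show Multiset.countP _ ((Finset.univ : Finset (Fin l.length)).val.powerset) = _
  rw [show ((Finset.univ : Finset (Finset (Fin l.length)))).val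
      = (Finset.univ : Finset (Fin l.length)).val.powerset.pmap Finset.mk
        (fun _t h => Multiset.nodup_of_le (Multiset.mem_powerset.1 h) Finset.univ.nodup)
    from by rw [← Finset.powerset_univ]; rfl]
  rw [Multiset.pmap_eq_map_attach, Multiset.countP_map]
  rw [← Multiset.countP_eq_card_filter, ← Multiset.countP_attach]
  refine Multiset.countP_congr rfl ?_
  rintro ⟨S, hS⟩ _
  simp only [Function.comp_apply]
  rw [eq_iff_iff]
  constructor
  · rintro ⟨h1, h2⟩
    rw [Multiset.card_map] at h1
    exact ⟨h1, h2⟩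
  · rintro ⟨h1, h2⟩
    rw [Finset.card_def] at h1
    rw [Multiset.card_map]
    exact ⟨h1, h2⟩

lemma lucas_cp (c : ℕ) (hp3 : 3 < p) :
    (((c * p + (p - 3)).choose p : ℕ) : ZMod p) = (c : ZMod p) := by
  have hpos : 0 < p := by omega
  have h := Choose.choose_modEq_choose_mod_mul_choose_div_nat (p := p)
    (n := c * p + (p - 3)) (k := p)
  have h1 : (c * p + (p - 3)) % p = p - 3 := by
    rw [Nat.add_comm, Nat.add_mul_mod_self_right, Nat.mod_eq_of_lt (by omega)]
  have h2 : (c * p + (p - 3)) / p = c := by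
    rw [Nat.add_comm, Nat.add_mul_div_right _ _ hpos, Nat.div_eq_of_lt (by omega)]
    omega
  rw [h1, h2, Nat.mod_self, Nat.div_self hpos, Nat.choose_zero_right, Nat.choose_one_right,
    one_mul] at h
  exact (ZMod.natCast_eq_natCast_iff _ _ _).mpr h

lemma relations {n : ℕ} (hp7 : 7 < p) (a : Fin n → (Fin 3 → ZMod p)) (hn : n = 5 * p - 3)
    (h1 : cnt a p = 0) :
    (cnt a (3 * p) : ZMod p) = 2 * (cnt a (2 * p) : ZMod p) + 4 ∧
    (cnt a (4 * p) : ZMod p) = (cnt a (2 * p) : ZMod p) + 3 := by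
  classical
  have hpos : 0 < p := by omega
  have hodd : Odd p := (Fact.out : p.Prime).odd_of_ne_two (by omega)
  -- Relation 1 : full index set
  have R1 := cw_rel a hodd (by rw [Fintype.card_fin]; omega)
  have hd : n / p = 4 := by
    rw [hn, show 5 * p - 3 = (p - 3) + 4 * p by omega, Nat.add_mul_div_right _ _ hpos,
      Nat.div_eq_of_lt (by omega)]
  rw [Fintype.card_fin, hd] at R1
  simp only [Finset.sum_range_succ, Finset.sum_range_zero] at R1
  rw [zero_add] at R1
  norm_num at R1
  rw [cnt_zero] at R1
  -- R1 : 1 - cnt p + cnt 2p - cnt 3p + cnt 4p = 0 (in some normal form)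
  -- Relation 2 : subsets of size 4p-3
  set m := 4 * p - 3 with hm
  have hsub : ∀ W ∈ Finset.powersetCard m (Finset.univ : Finset (Fin n)),
      ∑ k ∈ Finset.range 4, (-1 : ZMod p) ^ k * (cntW a W (k * p) : ZMod p) = 0 := by
    intro W hW
    rw [Finset.mem_powersetCard] at hW
    have hWc : Fintype.card {x // x ∈ W} = m := by rw [Fintype.card_coe, hW.2]
    have := cw_rel (fun i : {x // x ∈ W} => a i.1) hodd (by rw [hWc]; omega)
    rw [hWc, show m / p = 3 by
      rw [hm, show 4 * p - 3 = (p - 3) + 3 * p by omega, Nat.add_mul_div_right _ _ hpos,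
        Nat.div_eq_of_lt (by omega)]] at this
    rw [← this]
    refine Finset.sum_congr rfl fun k _ => ?_
    rw [cnt_subtype a W (k * p)]
  have R2 : ∑ k ∈ Finset.range 4, (-1 : ZMod p) ^ k *
      ((cnt a (k * p) * (n - k * p).choose (m - k * p) : ℕ) : ZMod p) = 0 := by
    have := Finset.sum_congr rfl hsub
    rw [Finset.sum_const, smul_zero] at this
    rw [← this, Finset.sum_comm]
    refine Finset.sum_congr rfl fun k hk => ?_
    have hk4 : k < 4 := Finset.mem_range.1 hk
    have hkp : k * p ≤ m := by
      have : k * p ≤ 3 * p := Nat.mul_le_mul_right p (by omega)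
      omega
    have hdc := double_count a (k * p) m hkp
    rw [Fintype.card_fin] at hdc
    rw [← Finset.mul_sum, ← Nat.cast_sum, hdc]
  -- evaluate the binomial coefficients mod p
  have hchoose : ∀ k : ℕ, k < 4 →
      (((n - k * p).choose (m - k * p) : ℕ) : ZMod p) = ((4 - k : ℕ) : ZMod p) := by
    intro k hk
    have key : ∀ c : ℕ, n - k * p = c * p + (p - 3) → m - k * p = (n - k * p) - p →
        p ≤ n - k * p → (4 - k : ℕ) = c →
        (((n - k * p).choose (m - k * p) : ℕ) : ZMod p) = ((4 - k : ℕ) : ZMod p) := by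
      intro c e1 e2 e3 e4
      rw [e2, Nat.choose_symm e3, e1, lucas_cp c (by omega), e4]
    interval_cases k
    · exact key 4 (by omega) (by omega) (by omega) rfl
    · exact key 3 (by omega) (by omega) (by omega) rfl
    · exact key 2 (by omega) (by omega) (by omega) rfl
    · exact key 1 (by omega) (by omega) (by omega) rfl
  -- expand R2
  have R2' : ∑ k ∈ Finset.range 4,
      (-1 : ZMod p) ^ k * ((cnt a (k * p) : ZMod p) * ((4 - k : ℕ) : ZMod p)) = 0 := by
    rw [← R2]
    refine Finset.sum_congr rfl fun k hk => ?_
    rw [Nat.cast_mul, hchoose k (Finset.mem_range.1 hk)]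
  simp only [Finset.sum_range_succ, Finset.sum_range_zero, zero_add] at R2'
  norm_num at R1 R2'
  rw [cnt_zero] at R2'
  rw [h1] at R1 R2'
  norm_num at R1 R2'
  constructor
  · linear_combination -R2'
  · linear_combination R1 - R2'

theorem stmt_16 (p : ℕ) (hp : p.Prime) (hp7 : 7 < p)
    (J : Multiset (Fin 3 → ZMod p)) (hJ : Multiset.card J = 5 * p - 3)
    (h1 : N p J = 0) (r : ℤ) (h2 : (N (2 * p) J : ℤ) ≡ r [ZMOD p]) :
    ((N (3 * p) J : ℤ) ≡ 2 * r + 4 [ZMOD p] ∧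
     (N (4 * p) J : ℤ) ≡ r + 3 [ZMOD p]) ∧
    ∀ i j : Fin 3, i ≠ j →
      ¬((p : ℤ) ∣ ![r, 2 * r + 4, r + 3] i ∧
        (p : ℤ) ∣ ![r, 2 * r + 4, r + 3] j) := by
  haveI : Fact p.Prime := ⟨hp⟩
  set l := J.toList with hldef
  have hJl : (↑l : Multiset (Fin 3 → ZMod p)) = J := Multiset.coe_toList J
  have hNc : ∀ k, N k J = cnt (l.get) k := fun k => by rw [← hJl]; exact N_eq_cnt k l
  have hlen : l.length = 5 * p - 3 := by rw [hldef, Multiset.length_toList, hJ]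
  have hrel := relations hp7 (l.get) hlen (by rw [← hNc]; exact h1)
  have e2' : (cnt l.get (2 * p) : ZMod p) = ((r : ℤ) : ZMod p) := by
    have h := (ZMod.intCast_eq_intCast_iff _ _ _).mpr h2
    rw [← hNc]
    rw [show (((N (2 * p) J : ℕ) : ℤ) : ZMod p) = ((N (2 * p) J : ℕ) : ZMod p) by push_cast; rfl]
      at h
    exact h
  refine ⟨⟨?_, ?_⟩, ?_⟩
  · rw [← ZMod.intCast_eq_intCast_iff]
    rw [show (((N (3 * p) J : ℕ) : ℤ) : ZMod p) = ((N (3 * p) J : ℕ) : ZMod p) by push_cast; rfl]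
    rw [hNc, hrel.1, e2']
    push_cast
    ring
  · rw [← ZMod.intCast_eq_intCast_iff]
    rw [show (((N (4 * p) J : ℕ) : ℤ) : ZMod p) = ((N (4 * p) J : ℕ) : ZMod p) by push_cast; rfl]
    rw [hNc, hrel.2, e2']
    push_cast
    ring
  · intro i j hij
    have hA : ¬((p : ℤ) ∣ r ∧ (p : ℤ) ∣ (2 * r + 4)) := by
      rintro ⟨⟨u, hu⟩, ⟨v, hv⟩⟩
      have h4 : (p : ℤ) ∣ 4 := ⟨v - 2 * u, by linear_combination hv - 2 * hu⟩
      have := Int.le_of_dvd (by norm_num) h4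
      omega
    have hB : ¬((p : ℤ) ∣ r ∧ (p : ℤ) ∣ (r + 3)) := by
      rintro ⟨⟨u, hu⟩, ⟨v, hv⟩⟩
      have h3 : (p : ℤ) ∣ 3 := ⟨v - u, by linear_combination hv - hu⟩
      have := Int.le_of_dvd (by norm_num) h3
      omega
    have hC : ¬((p : ℤ) ∣ (2 * r + 4) ∧ (p : ℤ) ∣ (r + 3)) := by
      rintro ⟨⟨u, hu⟩, ⟨v, hv⟩⟩
      have hd2 : (p : ℤ) ∣ 2 := ⟨2 * v - u, by linear_combination 2 * hv - hu⟩
      have := Int.le_of_dvd (by norm_num) hd2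
      omega
    fin_cases i <;> fin_cases j <;> simp_all <;> tauto
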